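/- Let X be a set equipped with two structures: a topological space structure t and a uniform space structure 𝓤 such that the topology induced by 𝓤 is coarser than t (i.e., every set open in the uniform topology is t-open; equivalently the identity map from (X,t) to X with the uniform topology is continuous). Then 𝓤 is normal with respect to t: for every subset A ⊆ X and every entourage U ∈ 𝓤, the t-closure of A is contained in the t-interior of the t-closure of the set B(A;U) = {y ∈ X : ∃ a ∈ A, (a,y) ∈ U}. -/

import Mathlib

open Topology

/-- A continuous uniformity on a topological space is normal:
if every set open in the topology induced by the uniform structure `u` is open
in the topology `t`, then for every `A ⊆ X` and every entourage `U` of `u`,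
the `t`-closure of `A` is contained in the `t`-interior of the `t`-closure of
the `U`-neighborhood `B(A;U) = {y | ∃ a ∈ A, (a,y) ∈ U}` of `A`. -/
theorem continuous_uniformity_is_normal {X : Type*} [t : TopologicalSpace X]
    (u : UniformSpace X)
    (hcont : ∀ s : Set X, IsOpen[u.toTopologicalSpace] s → IsOpen s)
    (A : Set X) (U : Set (X × X)) (hU : U ∈ @uniformity X u) :
    closure A ⊆ interior (closure {y : X | ∃ a ∈ A, (a, y) ∈ U}) := by
  have hle : t ≤ u.toTopologicalSpace := fun s hs => hcont s hs
  obtain ⟨V, hV, hVsymm, hVU⟩ := comp_symm_mem_uniformity_sets hU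
  intro x hx
  -- the V-ball of x is a t-neighborhood of x, hence meets A
  have hball : (UniformSpace.ball x V ∩ A).Nonempty :=
    mem_closure_iff_nhds.mp hx _
      (nhds_mono hle (@UniformSpace.ball_mem_nhds X u x V hV))
  obtain ⟨a, hav, haA⟩ := hball
  have hax : (a, x) ∈ V := hVsymm.symm x a hav
  -- the V-ball of x is contained in B(A;U)
  have hsub : UniformSpace.ball x V ⊆ {y : X | ∃ a ∈ A, (a, y) ∈ U} :=
    fun z hz => ⟨a, haA, hVU (SetRel.prodMk_mem_comp hax hz)⟩
  have hmem : {y : X | ∃ a ∈ A, (a, y) ∈ U} ∈ @nhds X t x := by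
    have : {y : X | ∃ a ∈ A, (a, y) ∈ U} ∈ @nhds X u.toTopologicalSpace x :=
      Filter.mem_of_superset (@UniformSpace.ball_mem_nhds X u x V hV) hsub
    exact nhds_mono hle this
  rw [mem_interior_iff_mem_nhds]
  exact Filter.mem_of_superset hmem subset_closure
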